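/- Let S be a subdivision of a convex lattice polygon Δ ⊂ ℝ² into convex lattice polygons Δ_1, …, Δ_N induced by a convex piecewise-linear function. Then the rank of S (the dimension of the space of combinatorially isotopic amoebas) satisfies rk(S) ≥ |V(S)| − 1 − Σ_{i=1}^N (|V(Δ_i)| − 3), where V(S) is the set of vertices of S and V(Δ_i) the set of vertices of Δ_i. -/

import Mathlib

/-- Embedding of the integer lattice into the real plane. -/
def toR (p : ℤ × ℤ) : ℝ × ℝ := ((p.1 : ℝ), (p.2 : ℝ))

/-- Restriction to a finite point set `S` of the affine function
`(x,y) ↦ p₀ x + p₁ y + p₂`, as a linear map in the parameters `p`. -/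
noncomputable def affRestrict (S : Finset (ℝ × ℝ)) : (Fin 3 → ℝ) →ₗ[ℝ] (S → ℝ) where
  toFun p := fun v => p 0 * (v : ℝ × ℝ).1 + p 1 * (v : ℝ × ℝ).2 + p 2
  map_add' p q := by funext v; simp only [Pi.add_apply]; ring
  map_smul' c p := by funext v; simp only [Pi.smul_apply, smul_eq_mul, RingHom.id_apply]; ring

/-- The subspace of functions `(ℝ×ℝ) → ℝ` whose restriction to `S` agrees with some
affine function. -/
noncomputable def affCompatible (S : Finset (ℝ × ℝ)) : Submodule ℝ ((ℝ × ℝ) → ℝ) :=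
  Submodule.comap (LinearMap.funLeft ℝ ℝ (Subtype.val : S → ℝ × ℝ))
    (LinearMap.range (affRestrict S))

/-- The subspace of functions `(ℝ×ℝ) → ℝ` vanishing outside the finite set `V`. -/
noncomputable def supportedOn (V : Finset (ℝ × ℝ)) : Submodule ℝ ((ℝ × ℝ) → ℝ) :=
  ⨅ (v : ℝ × ℝ) (_ : v ∉ V),
    LinearMap.ker (LinearMap.proj (R := ℝ) (φ := fun _ : ℝ × ℝ => ℝ) v)

/-- The space of vertex-value assignments compatible with a subdivision into the polygons
with vertex sets `P i`: functions supported on the vertex set `V` which are affine on the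
vertices of each polygon.  The rank of the subdivision is `finrank` of this space minus
one (the defining convex piecewise-linear function matters up to an additive constant). -/
noncomputable def subdivisionSpace {N : ℕ} (V : Finset (ℝ × ℝ))
    (P : Fin N → Finset (ℝ × ℝ)) : Submodule ℝ ((ℝ × ℝ) → ℝ) :=
  supportedOn V ⊓ ⨅ i, affCompatible (P i)

-- auxiliary lemmas

lemma mem_supportedOn' {V : Finset (ℝ × ℝ)} {f : (ℝ × ℝ) → ℝ} :
    f ∈ supportedOn V ↔ ∀ v ∉ V, f v = 0 := by
  simp [supportedOn, Submodule.mem_iInf, LinearMap.mem_ker]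

noncomputable def supportedOnEquiv (V : Finset (ℝ × ℝ)) :
    supportedOn V ≃ₗ[ℝ] (V → ℝ) where
  toFun f := fun v => f.1 v
  map_add' f g := rfl
  map_smul' c f := rfl
  invFun g := ⟨fun v => if h : v ∈ V then g ⟨v, h⟩ else 0, by
    rw [mem_supportedOn']; intro v hv; simp [hv]⟩
  left_inv f := Subtype.ext (funext fun v => by
    by_cases h : v ∈ V
    · simp [h]
    · simp [h, mem_supportedOn'.mp f.2 v h])
  right_inv g := funext fun v => by simp

lemma collinear_of_affine {s : Set (ℝ × ℝ)} {a b c : ℝ} (hab : a ≠ 0 ∨ b ≠ 0)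
    (h : ∀ p ∈ s, a * p.1 + b * p.2 = c) : Collinear ℝ s := by
  rcases s.eq_empty_or_nonempty with rfl | ⟨p₀, hp₀⟩
  · exact collinear_empty ℝ _
  rw [collinear_iff_of_mem hp₀]
  refine ⟨(-b, a), fun p hp => ?_⟩
  have h1 := h p hp
  have h0 := h p₀ hp₀
  have hd : a * (p.1 - p₀.1) + b * (p.2 - p₀.2) = 0 := by linarith
  rcases eq_or_ne a 0 with ha | ha
  · have hb : b ≠ 0 := hab.resolve_left (by simp [ha])
    refine ⟨-(p.1 - p₀.1) / b, ?_⟩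
    have h2 : p.2 - p₀.2 = 0 := by
      rw [ha] at hd; simp only [zero_mul, zero_add] at hd
      exact (mul_eq_zero.mp hd).resolve_left hb
    have : p = (p.1, p.2) := rfl
    rw [Prod.ext_iff]
    constructor
    · show p.1 = -(p.1 - p₀.1) / b * (-b) + p₀.1
      field_simp; ring
    · show p.2 = -(p.1 - p₀.1) / b * a + p₀.2
      rw [ha]; linarith
  · refine ⟨(p.2 - p₀.2) / a, ?_⟩
    rw [Prod.ext_iff]
    constructor
    · show p.1 = (p.2 - p₀.2) / a * (-b) + p₀.1
      field_simp; linarith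
    · show p.2 = (p.2 - p₀.2) / a * a + p₀.2
      field_simp; ring

lemma affRestrict_injective {S : Finset (ℝ × ℝ)} (h : ¬ Collinear ℝ (S : Set (ℝ × ℝ))) :
    Function.Injective (affRestrict S) := by
  rw [← LinearMap.ker_eq_bot, Submodule.eq_bot_iff]
  intro p hp
  rw [LinearMap.mem_ker] at hp
  have heq : ∀ v ∈ S, p 0 * v.1 + p 1 * v.2 + p 2 = 0 := fun v hv => congrFun hp ⟨v, hv⟩
  by_cases h01 : p 0 = 0 ∧ p 1 = 0
  · obtain ⟨v, hv⟩ : S.Nonempty := by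
      rw [Finset.nonempty_iff_ne_empty]
      rintro rfl
      exact h (by simpa using collinear_empty ℝ (ℝ × ℝ))
    have hp2 : p 2 = 0 := by have := heq v hv; rw [h01.1, h01.2] at this; linarith
    funext i; fin_cases i <;> simp [h01.1, h01.2, hp2]
  · exact absurd (collinear_of_affine (a := p 0) (b := p 1) (c := -(p 2))
      (not_and_or.mp h01 |>.imp id id) (fun q hq => by have := heq q (by exact_mod_cast hq); linarith)) h

instance supportedOn_finiteDimensional (V : Finset (ℝ × ℝ)) :
    FiniteDimensional ℝ (supportedOn V) :=
  Module.Finite.equiv (supportedOnEquiv V).symm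

lemma finrank_supportedOn (V : Finset (ℝ × ℝ)) :
    Module.finrank ℝ (supportedOn V) = V.card := by
  rw [(supportedOnEquiv V).finrank_eq, Module.finrank_fintype_fun_eq_card, Fintype.card_coe]


/-- for a subdivision of a convex lattice polygon Δ into convex lattice
polygons Δ₁,…,Δ_N induced by a convex piecewise-linear function, the rank satisfies
rk(S) ≥ |V(S)| − 1 − Σᵢ (|V(Δᵢ)| − 3). -/
theorem rank_lower_bound_for_subdivision
    (N : ℕ) (hN : 0 < N) (P : Fin N → Finset (ℝ × ℝ)) (V : Finset (ℝ × ℝ))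
    (hV : ∀ v : ℝ × ℝ, v ∈ V ↔ ∃ i, v ∈ P i)
    (hlat : ∀ i, ∀ v ∈ P i, ∃ p : ℤ × ℤ, v = toR p)
    (hnondeg : ∀ i, ¬ Collinear ℝ ((P i : Set (ℝ × ℝ))))
    (hvert : ∀ i, ∀ v ∈ P i, v ∈ Set.extremePoints ℝ (convexHull ℝ (P i : Set (ℝ × ℝ))))
    (hdisj : ∀ i j, i ≠ j →
      interior (convexHull ℝ (P i : Set (ℝ × ℝ))) ∩
        interior (convexHull ℝ (P j : Set (ℝ × ℝ))) = ∅)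
    (hconv : ∃ ν : ℝ × ℝ → ℝ,
      ConvexOn ℝ (convexHull ℝ (⋃ i, (P i : Set (ℝ × ℝ)))) ν ∧
      ∀ i, ∃ a : (ℝ × ℝ) →ᵃ[ℝ] ℝ, Set.EqOn ν a (convexHull ℝ (P i : Set (ℝ × ℝ)))) :
    (V.card : ℤ) - 1 - ∑ i, ((P i).card - 3 : ℤ)
      ≤ (Module.finrank ℝ (subdivisionSpace V P) : ℤ) - 1 := by
  classical
  set W := supportedOn V
  -- the quotient spaces
  let Q : Fin N → Type := fun i => (P i → ℝ) ⧸ LinearMap.range (affRestrict (P i))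
  let L : ((ℝ × ℝ) → ℝ) →ₗ[ℝ] ∀ i, Q i :=
    LinearMap.pi fun i =>
      (LinearMap.range (affRestrict (P i))).mkQ ∘ₗ
        LinearMap.funLeft ℝ ℝ (Subtype.val : (P i) → ℝ × ℝ)
  have hker : LinearMap.ker L = ⨅ i, affCompatible (P i) := by
    rw [LinearMap.ker_pi]
    refine iInf_congr fun i => ?_
    rw [LinearMap.ker_comp, Submodule.ker_mkQ]
    rfl
  have hsub : subdivisionSpace V P = W ⊓ LinearMap.ker L := by
    rw [subdivisionSpace, hker]
  -- rank-nullity for the restriction of L to W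
  let f' := L.domRestrict W
  have hrn : Module.finrank ℝ (LinearMap.range f') + Module.finrank ℝ (LinearMap.ker f')
      = Module.finrank ℝ W := LinearMap.finrank_range_add_finrank_ker f'
  have hkerf' : Module.finrank ℝ (LinearMap.ker f')
      = Module.finrank ℝ (subdivisionSpace V P) := by
    rw [hsub]
    have h1 : LinearMap.ker f' = Submodule.comap W.subtype (W ⊓ LinearMap.ker L) := by
      rw [LinearMap.ker_domRestrict, Submodule.comap_inf, Submodule.comap_subtype_self, top_inf_eq]
    rw [h1]
    exact LinearEquiv.finrank_eq (Submodule.comapSubtypeEquivOfLe inf_le_left)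
  -- dimension of each quotient
  have hQ : ∀ i, Module.finrank ℝ (Q i) + 3 = (P i).card := by
    intro i
    have h3 : Module.finrank ℝ (LinearMap.range (affRestrict (P i))) = 3 := by
      rw [LinearMap.finrank_range_of_inj (affRestrict_injective (hnondeg i))]
      simp [Module.finrank_fintype_fun_eq_card]
    have := Submodule.finrank_quotient_add_finrank (LinearMap.range (affRestrict (P i)))
    rw [h3, Module.finrank_fintype_fun_eq_card, Fintype.card_coe] at this
    exact this
  -- bound the range
  have hrange : Module.finrank ℝ (LinearMap.range f') ≤ ∑ i, Module.finrank ℝ (Q i) := by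
    have := Submodule.finrank_le (LinearMap.range f')
    rwa [Module.finrank_pi_fintype] at this
  have hW : Module.finrank ℝ W = V.card := finrank_supportedOn V
  have hsum : ∑ i, ((P i).card - 3 : ℤ) = ∑ i, (Module.finrank ℝ (Q i) : ℤ) := by
    refine Finset.sum_congr rfl fun i _ => ?_
    have := hQ i
    omega
  rw [hsum]
  have h1 : (V.card : ℤ) = (Module.finrank ℝ (LinearMap.range f') : ℤ)
      + (Module.finrank ℝ (subdivisionSpace V P) : ℤ) := by
    rw [← hW, ← hrn, hkerf']; push_cast; ring
  have h2 : (Module.finrank ℝ (LinearMap.range f') : ℤ) ≤ ∑ i, (Module.finrank ℝ (Q i) : ℤ) := by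
    exact_mod_cast hrange.trans_eq (by push_cast; rfl)
  omega
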